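/- Let γ : ℝ → ℝ^d be twice continuously differentiable. Then lim_{N → ∞} N³ · Σ_{i=1}^{N−1} ‖γ((i+1)/N) − 2·γ(i/N) + γ((i−1)/N)‖² = ∫₀¹ ‖γ''(s)‖² ds. -/

import Mathlib

open Filter

lemma riemann_sum_tendsto (f : ℝ → ℝ) (hf : Continuous f) :
    Tendsto (fun N : ℕ => ∑ i ∈ Finset.range N, f ((i : ℝ) / N) / N) atTop
      (nhds (∫ s in (0:ℝ)..1, f s)) := by
  rw [Metric.tendsto_atTop]
  intro ε hε
  have hc : IsCompact (Set.Icc (0:ℝ) 1) := isCompact_Icc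
  have huc := hc.uniformContinuousOn_of_continuous hf.continuousOn
  rw [Metric.uniformContinuousOn_iff] at huc
  obtain ⟨δ, hδ, hucd⟩ := huc (ε/2) (by linarith)
  obtain ⟨N₀, hN₀⟩ := exists_nat_gt (1/δ)
  refine ⟨max N₀ 1, fun N hN => ?_⟩
  have hN1 : 1 ≤ N := le_trans (le_max_right _ _) hN
  have hNpos : (0:ℝ) < N := by exact_mod_cast hN1
  have hNδ : 1 / (N:ℝ) < δ := by
    rw [div_lt_iff₀ hNpos]
    have h1 : (N₀ : ℝ) ≤ N := by exact_mod_cast le_trans (le_max_left _ _) hN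
    have h2 : 1 < (N₀:ℝ) * δ := (div_lt_iff₀ hδ).mp hN₀
    nlinarith [mul_le_mul_of_nonneg_right h1 hδ.le]
  have hint : ∀ k < N, IntervalIntegrable f MeasureTheory.volume ((k:ℝ)/N) (((k:ℕ)+1:ℕ)/N) :=
    fun k _ => hf.intervalIntegrable _ _
  have hsplit := intervalIntegral.sum_integral_adjacent_intervals (a := fun k : ℕ => (k:ℝ)/N) hint
  simp only [Nat.cast_zero, zero_div] at hsplit
  have hNN : ((N:ℝ))/N = 1 := by field_simp
  rw [hNN] at hsplit
  rw [dist_eq_norm, ← hsplit, ← Finset.sum_sub_distrib]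
  have hterm : ∀ i ∈ Finset.range N,
      ‖f ((i:ℝ)/N) / N - ∫ x in ((i:ℝ)/N)..(((i:ℕ)+1:ℕ):ℝ)/N, f x‖ ≤ (ε/2) / N := by
    intro i hi
    have hiN : (i:ℝ) + 1 ≤ N := by exact_mod_cast Finset.mem_range.mp hi
    have hle : (i:ℝ)/N ≤ (((i:ℕ)+1:ℕ):ℝ)/N := by
      push_cast; gcongr <;> linarith
    have hi1 : (((i:ℕ)+1:ℕ):ℝ)/N ≤ 1 := by
      push_cast; rw [div_le_one hNpos]; linarith
    have hi0 : (0:ℝ) ≤ (i:ℝ)/N := by positivity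
    have hwid : (((i:ℕ)+1:ℕ):ℝ)/N - (i:ℝ)/N = 1/N := by push_cast; field_simp; ring
    have hconst : f ((i:ℝ)/N) / N = ∫ _x in ((i:ℝ)/N)..((((i:ℕ)+1:ℕ):ℝ)/N), f ((i:ℝ)/N) := by
      rw [intervalIntegral.integral_const, smul_eq_mul, hwid]
      ring
    rw [hconst, ← intervalIntegral.integral_sub intervalIntegrable_const
      (hf.intervalIntegrable _ _)]
    have hb : ∀ x ∈ Set.uIoc ((i:ℝ)/N) ((((i:ℕ)+1:ℕ):ℝ)/N), ‖f ((i:ℝ)/N) - f x‖ ≤ ε/2 := by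
      intro x hx
      rw [Set.uIoc_of_le hle] at hx
      have hx1 : x ∈ Set.Icc (0:ℝ) 1 := ⟨le_trans hi0 (le_of_lt hx.1), le_trans hx.2 hi1⟩
      have hxi : (i:ℝ)/N ∈ Set.Icc (0:ℝ) 1 := ⟨hi0, le_trans hle hi1⟩
      have hdist : dist ((i:ℝ)/N) x < δ := by
        rw [Real.dist_eq, abs_of_nonpos (by linarith [hx.1])]
        have : x - (i:ℝ)/N ≤ 1/N := by
          have := hx.2; rw [← hwid]; linarith
        linarith
      have := hucd _ hxi _ hx1 hdist
      rw [dist_eq_norm] at this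
      exact le_of_lt this
    have hB := intervalIntegral.norm_integral_le_of_norm_le_const hb
    calc ‖_‖ ≤ ε/2 * |(((i:ℕ)+1:ℕ):ℝ)/N - (i:ℝ)/N| := hB
    _ = (ε/2)/N := by rw [hwid, abs_of_nonneg (by positivity)]; ring
  calc ‖∑ i ∈ Finset.range N, (f ((i:ℝ)/N) / N - ∫ x in ((i:ℝ)/N)..(((i:ℕ)+1:ℕ):ℝ)/N, f x)‖
      ≤ ∑ i ∈ Finset.range N, ‖f ((i:ℝ)/N) / N - ∫ x in ((i:ℝ)/N)..(((i:ℕ)+1:ℕ):ℝ)/N, f x‖ :=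
        norm_sum_le _ _
    _ ≤ ∑ _i ∈ Finset.range N, (ε/2)/N := Finset.sum_le_sum hterm
    _ = ε/2 := by
        rw [Finset.sum_const, Finset.card_range, nsmul_eq_mul]
        field_simp
    _ < ε := by linarith
open Filter

lemma second_diff_bound {E : Type*} [NormedAddCommGroup E] [NormedSpace ℝ E] [CompleteSpace E]
    (γ : ℝ → E) (hγ : ContDiff ℝ 2 γ) (x h ε' δ : ℝ) (hh : 0 < h) (hhδ : h < δ)
    (hx0 : 0 ≤ x - h) (hx1 : x + h ≤ 1) (hε' : 0 ≤ ε')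
    (hδb : ∀ u ∈ Set.Icc (0:ℝ) 1, dist u x < δ → ‖deriv (deriv γ) u - deriv (deriv γ) x‖ ≤ ε') :
    ‖γ (x + h) - (2:ℝ) • γ x + γ (x - h) - (h^2) • deriv (deriv γ) x‖ ≤ 2 * ε' * h^2 := by
  have hγ1 : ContDiff ℝ 1 (deriv γ) := by
    have h2 : ContDiff ℝ (1+1 : ℕ) γ := by norm_num; exact_mod_cast hγ
    exact (contDiff_succ_iff_deriv.mp (by exact_mod_cast h2)).2.2
  have hd1 : Differentiable ℝ γ := hγ.differentiable two_ne_zero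
  have hd2 : Differentiable ℝ (deriv γ) := hγ1.differentiable one_ne_zero
  have hcg : Continuous (deriv γ) := hd2.continuous
  have hcg2 : Continuous (deriv (deriv γ)) := hγ1.continuous_deriv le_rfl
  -- Step A
  have hA : ∀ t : ℝ, HasDerivAt (fun u => γ (x + u) + γ (x - u))
      (deriv γ (x + t) - deriv γ (x - t)) t := by
    intro t
    have e1 : HasDerivAt (fun u : ℝ => x + u) 1 t := by
      simpa using (hasDerivAt_id t).const_add x
    have e2 : HasDerivAt (fun u : ℝ => x - u) (-1) t := by
      simpa using (hasDerivAt_id t).const_sub x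
    have h1 := ((hd1 (x+t)).hasDerivAt).scomp t e1
    have h2 := ((hd1 (x-t)).hasDerivAt).scomp t e2
    have := h1.add h2
    simpa [sub_eq_add_neg, Function.comp_def, Pi.add_def] using this
  have hX : ∫ t in (0:ℝ)..h, (deriv γ (x + t) - deriv γ (x - t)) =
      (γ (x + h) + γ (x - h)) - (γ (x + 0) + γ (x - 0)) :=
    intervalIntegral.integral_eq_sub_of_hasDerivAt (fun t _ => hA t)
      (Continuous.intervalIntegrable (by fun_prop) _ _)
  simp only [add_zero, sub_zero] at hX
  -- Step B
  have hB : ∀ t : ℝ, deriv γ (x + t) - deriv γ (x - t) =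
      ∫ u in (x - t)..(x + t), deriv (deriv γ) u := by
    intro t
    exact (intervalIntegral.integral_eq_sub_of_hasDerivAt
      (fun u _ => (hd2 u).hasDerivAt) (hcg2.intervalIntegrable _ _)).symm
  -- Step C
  have hC : (h^2) • deriv (deriv γ) x = ∫ t in (0:ℝ)..h, (2*t) • deriv (deriv γ) x := by
    rw [intervalIntegral.integral_smul_const]
    congr 1
    rw [intervalIntegral.integral_const_mul, integral_id]
    ring
  have hV : γ (x + h) - (2:ℝ) • γ x + γ (x - h) - (h^2) • deriv (deriv γ) x =
      ∫ t in (0:ℝ)..h, ((deriv γ (x + t) - deriv γ (x - t)) - (2*t) • deriv (deriv γ) x) := by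
    rw [intervalIntegral.integral_sub
      (Continuous.intervalIntegrable (by fun_prop) _ _)
      (Continuous.intervalIntegrable (by fun_prop) _ _),
      hX, ← hC]
    rw [two_smul]
    abel
  rw [hV]
  have hbound : ∀ t ∈ Set.uIoc (0:ℝ) h,
      ‖(deriv γ (x + t) - deriv γ (x - t)) - (2*t) • deriv (deriv γ) x‖ ≤ ε' * (2*h) := by
    intro t ht
    rw [Set.uIoc_of_le hh.le] at ht
    have ht0 : 0 < t := ht.1
    have hth : t ≤ h := ht.2
    have hconst : (2*t) • deriv (deriv γ) x =
        ∫ _u in (x - t)..(x + t), deriv (deriv γ) x := by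
      rw [intervalIntegral.integral_const]
      congr 1
      ring
    rw [hB t, hconst, ← intervalIntegral.integral_sub (hcg2.intervalIntegrable _ _)
      intervalIntegrable_const]
    have hin : ∀ u ∈ Set.uIoc (x - t) (x + t),
        ‖deriv (deriv γ) u - deriv (deriv γ) x‖ ≤ ε' := by
      intro u hu
      rw [Set.uIoc_of_le (by linarith)] at hu
      have hu1 : u ∈ Set.Icc (0:ℝ) 1 := ⟨by linarith [hu.1], by linarith [hu.2]⟩
      apply hδb u hu1
      rw [Real.dist_eq, abs_lt]
      constructor <;> [linarith [hu.1]; linarith [hu.2]]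
    calc ‖_‖ ≤ ε' * |(x + t) - (x - t)| :=
          intervalIntegral.norm_integral_le_of_norm_le_const hin
      _ = ε' * (2*t) := by rw [show (x+t)-(x-t) = 2*t by ring, abs_of_pos (by linarith)]
      _ ≤ ε' * (2*h) := by nlinarith
  calc ‖_‖ ≤ ε' * (2*h) * |h - 0| :=
        intervalIntegral.norm_integral_le_of_norm_le_const hbound
    _ = 2 * ε' * h^2 := by rw [sub_zero, abs_of_pos hh]; ring

lemma sq_diff_bound (A B D M e h : ℝ) (hA : 0 ≤ A) (hB0 : 0 ≤ B) (hD0 : 0 ≤ D)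
    (htri1 : A - B ≤ D) (htri2 : B - A ≤ D) (hD : D ≤ 2*e*h^2) (hB : B ≤ M*h^2)
    (heM : e ≤ M) (he : 0 ≤ e) (hh : 0 ≤ h) :
    |A^2 - B^2| ≤ 8*M*e*h^4 := by
  have hmul : e * h^2 ≤ M * h^2 := mul_le_mul_of_nonneg_right heM (sq_nonneg h)
  have hApB : A + B ≤ 4*M*h^2 := by linarith
  have hnn : (0:ℝ) ≤ A + B := by linarith
  have h1 : A^2 - B^2 ≤ D*(A+B) := by nlinarith [mul_nonneg (show (0:ℝ) ≤ D - (A-B) by linarith) hnn]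
  have h1' : B^2 - A^2 ≤ D*(A+B) := by nlinarith [mul_nonneg (show (0:ℝ) ≤ D - (B-A) by linarith) hnn]
  have h2 : D*(A+B) ≤ (2*e*h^2)*(4*M*h^2) := mul_le_mul hD hApB hnn (by positivity)
  have h3 : (2*e*h^2)*(4*M*h^2) = 8*M*e*h^4 := by ring
  rw [abs_le]
  constructor <;> linarith

set_option maxHeartbeats 1600000 in
/-- Convergence of the normalized discrete curvature energy to the
continuum one: `N³ Σ_{i=1}^{N-1} ‖γ((i+1)/N) - 2γ(i/N) + γ((i-1)/N)‖² → ∫₀¹ ‖γ''(s)‖² ds`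
as `N → ∞`. -/
theorem discrete_energy_tendsto {d : ℕ} (γ : ℝ → EuclideanSpace ℝ (Fin d))
    (hγ : ContDiff ℝ 2 γ) :
    Tendsto (fun N : ℕ =>
        (N : ℝ) ^ 3 * ∑ i ∈ Finset.Ico 1 N,
          ‖γ (((i : ℝ) + 1) / N) - (2:ℝ) • γ ((i : ℝ) / N) + γ (((i : ℝ) - 1) / N)‖ ^ 2)
      atTop (nhds (∫ s in (0:ℝ)..1, ‖deriv (deriv γ) s‖ ^ 2)) := by
  have hγ1 : ContDiff ℝ 1 (deriv γ) := by
    have h2 : ContDiff ℝ (1+1 : ℕ) γ := by norm_num; exact_mod_cast hγ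
    exact (contDiff_succ_iff_deriv.mp (by exact_mod_cast h2)).2.2
  have hcg2 : Continuous (deriv (deriv γ)) := hγ1.continuous_deriv le_rfl
  have hf : Continuous fun s => ‖deriv (deriv γ) s‖^2 := by fun_prop
  have hR := riemann_sum_tendsto _ hf
  set S : ℕ → ℝ := fun N => (N:ℝ)^3 * ∑ i ∈ Finset.Ico 1 N,
    ‖γ (((i:ℝ)+1)/N) - (2:ℝ) • γ ((i:ℝ)/N) + γ (((i:ℝ)-1)/N)‖^2 with hSdef
  set T : ℕ → ℝ := fun N => ∑ i ∈ Finset.range N, ‖deriv (deriv γ) ((i:ℝ)/N)‖^2 / N with hTdef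
  suffices hdiff : Tendsto (fun N => S N - T N) atTop (nhds 0) by
    have h3 := hdiff.add hR
    rw [zero_add] at h3
    have he : (fun N => S N - T N + T N) = S := by funext N; ring
    rwa [he] at h3
  rw [Metric.tendsto_atTop]
  intro ε hε
  obtain ⟨M₀, hM₀⟩ := (isCompact_Icc (a := (0:ℝ)) (b := 1)).exists_bound_of_continuousOn
    hcg2.continuousOn
  set M : ℝ := max M₀ 1 with hMdef
  have hMpos : (0:ℝ) < M := lt_of_lt_of_le one_pos (le_max_right _ _)
  have hM : ∀ u ∈ Set.Icc (0:ℝ) 1, ‖deriv (deriv γ) u‖ ≤ M :=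
    fun u hu => le_trans (hM₀ u hu) (le_max_left _ _)
  set ε' : ℝ := min M (ε/(9*M)) with hε'def
  have hε'pos : 0 < ε' := lt_min hMpos (by positivity)
  have hε'M : ε' ≤ M := min_le_left _ _
  have hε'ε : ε' ≤ ε/(9*M) := min_le_right _ _
  have huc := (isCompact_Icc (a := (0:ℝ)) (b := 1)).uniformContinuousOn_of_continuous
    hcg2.continuousOn
  rw [Metric.uniformContinuousOn_iff] at huc
  obtain ⟨δ, hδ, hucd⟩ := huc ε' hε'pos
  obtain ⟨N₁, hN₁⟩ := exists_nat_gt (1/δ)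
  obtain ⟨N₂, hN₂⟩ := exists_nat_gt (9*M^2/ε)
  refine ⟨max (max N₁ N₂) 1, fun N hN => ?_⟩
  have hN1 : 1 ≤ N := le_trans (le_max_right _ _) hN
  have hNpos : (0:ℝ) < N := by exact_mod_cast hN1
  have hNδ : 1/(N:ℝ) < δ := by
    have h1 : (N₁:ℝ) ≤ N := by
      exact_mod_cast le_trans (le_trans (le_max_left _ _) (le_max_left _ _)) hN
    have h2 : 1 < (N₁:ℝ) * δ := (div_lt_iff₀ hδ).mp hN₁
    rw [div_lt_iff₀ hNpos]
    nlinarith [mul_le_mul_of_nonneg_right h1 hδ.le]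
  have hNM : M^2/(N:ℝ) < ε/9 := by
    have h1 : (N₂:ℝ) ≤ N := by
      exact_mod_cast le_trans (le_trans (le_max_right _ _) (le_max_left _ _)) hN
    have h2 : 9*M^2/ε < (N:ℝ) := lt_of_lt_of_le hN₂ h1
    rw [div_lt_iff₀ hNpos]
    rw [div_lt_iff₀ hε] at h2
    nlinarith
  -- per-term bound
  have hmain : ∀ i ∈ Finset.Ico 1 N,
      |(N:ℝ)^3 * ‖γ (((i:ℝ)+1)/N) - (2:ℝ) • γ ((i:ℝ)/N) + γ (((i:ℝ)-1)/N)‖^2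
        - ‖deriv (deriv γ) ((i:ℝ)/N)‖^2/N| ≤ 8*M*ε'/N := by
    intro i hi
    obtain ⟨hi1, hiN⟩ := Finset.mem_Ico.mp hi
    have hi1' : (1:ℝ) ≤ i := by exact_mod_cast hi1
    have hiN' : (i:ℝ) + 1 ≤ N := by exact_mod_cast hiN
    set x : ℝ := (i:ℝ)/N with hxdef
    set h : ℝ := 1/(N:ℝ) with hhdef
    have hh : 0 < h := by positivity
    have e1 : ((i:ℝ)+1)/N = x + h := by rw [hxdef, hhdef]; ring
    have e2 : ((i:ℝ)-1)/N = x - h := by rw [hxdef, hhdef]; ring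
    have hx0 : 0 ≤ x - h := by
      rw [hxdef, hhdef, div_sub_div_same]
      exact div_nonneg (by linarith) hNpos.le
    have hx1 : x + h ≤ 1 := by
      rw [hxdef, hhdef, ← add_div, div_le_one hNpos]
      linarith
    have hxmem : x ∈ Set.Icc (0:ℝ) 1 := ⟨by positivity, by linarith⟩
    have hδb : ∀ u ∈ Set.Icc (0:ℝ) 1, dist u x < δ →
        ‖deriv (deriv γ) u - deriv (deriv γ) x‖ ≤ ε' := by
      intro u hu hdu
      have := hucd u hu x hxmem hdu
      rw [dist_eq_norm] at this
      exact this.le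
    have key := second_diff_bound γ hγ x h ε' δ hh hNδ hx0 hx1 hε'pos.le hδb
    rw [e1, e2]
    set a := γ (x + h) - (2:ℝ) • γ x + γ (x - h) with hadef
    set b := (h^2) • deriv (deriv γ) x with hbdef
    have hBnorm : ‖b‖ = h^2 * ‖deriv (deriv γ) x‖ := by
      rw [hbdef, norm_smul, Real.norm_eq_abs, abs_of_pos (by positivity)]
    have hBle : ‖b‖ ≤ M * h^2 := by
      rw [hBnorm]
      have := hM x hxmem
      nlinarith
    have hFeq : ‖deriv (deriv γ) x‖^2 / N = (N:ℝ)^3 * ‖b‖^2 := by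
      rw [hBnorm, hhdef]
      field_simp
    rw [hFeq, ← mul_sub, abs_mul, abs_of_pos (by positivity : (0:ℝ) < (N:ℝ)^3)]
    have htri := abs_le.mp (abs_norm_sub_norm_le a b)
    have habs : |‖a‖^2 - ‖b‖^2| ≤ 8*M*ε'*h^4 :=
      sq_diff_bound _ _ _ _ _ _ (norm_nonneg a) (norm_nonneg b) (norm_nonneg (a-b))
        htri.2 (by linarith [htri.1]) key hBle hε'M hε'pos.le hh.le
    calc (N:ℝ)^3 * |‖a‖^2 - ‖b‖^2| ≤ (N:ℝ)^3 * (8*M*ε'*h^4) := by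
          apply mul_le_mul_of_nonneg_left habs (by positivity)
      _ = 8*M*ε'/N := by rw [hhdef]; field_simp
  -- sum manipulation
  have hTsplit : T N = ‖deriv (deriv γ) 0‖^2/N
      + ∑ i ∈ Finset.Ico 1 N, ‖deriv (deriv γ) ((i:ℝ)/N)‖^2/N := by
    rw [hTdef]
    simp only
    rw [Finset.range_eq_Ico, Finset.sum_eq_sum_Ico_succ_bot hN1]
    norm_num
  have hSsum : S N = ∑ i ∈ Finset.Ico 1 N,
      (N:ℝ)^3 * ‖γ (((i:ℝ)+1)/N) - (2:ℝ) • γ ((i:ℝ)/N) + γ (((i:ℝ)-1)/N)‖^2 := by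
    rw [hSdef]; simp only; rw [Finset.mul_sum]
  have hsplit : S N - T N = (∑ i ∈ Finset.Ico 1 N,
      ((N:ℝ)^3 * ‖γ (((i:ℝ)+1)/N) - (2:ℝ) • γ ((i:ℝ)/N) + γ (((i:ℝ)-1)/N)‖^2
        - ‖deriv (deriv γ) ((i:ℝ)/N)‖^2/N)) - ‖deriv (deriv γ) 0‖^2/N := by
    rw [hSsum, hTsplit, Finset.sum_sub_distrib]
    ring
  rw [Real.dist_eq, sub_zero, hsplit]
  have hb1 : |∑ i ∈ Finset.Ico 1 N,
      ((N:ℝ)^3 * ‖γ (((i:ℝ)+1)/N) - (2:ℝ) • γ ((i:ℝ)/N) + γ (((i:ℝ)-1)/N)‖^2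
        - ‖deriv (deriv γ) ((i:ℝ)/N)‖^2/N)| ≤ 8*M*ε' := by
    calc _ ≤ ∑ i ∈ Finset.Ico 1 N,
        |(N:ℝ)^3 * ‖γ (((i:ℝ)+1)/N) - (2:ℝ) • γ ((i:ℝ)/N) + γ (((i:ℝ)-1)/N)‖^2
          - ‖deriv (deriv γ) ((i:ℝ)/N)‖^2/N| := Finset.abs_sum_le_sum_abs _ _
      _ ≤ ∑ _i ∈ Finset.Ico 1 N, 8*M*ε'/N := Finset.sum_le_sum hmain
      _ = (N - 1 : ℕ) * (8*M*ε'/N) := by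
          rw [Finset.sum_const, Nat.card_Ico, nsmul_eq_mul]
      _ ≤ 8*M*ε' := by
          have hc : ((N - 1 : ℕ) : ℝ) ≤ N := by
            have : (N - 1 : ℕ) ≤ N := Nat.sub_le _ _
            exact_mod_cast this
          rw [mul_div_assoc']
          rw [div_le_iff₀ hNpos]
          have h8 : 0 ≤ 8*M*ε' := by positivity
          nlinarith
  have hb2 : ‖deriv (deriv γ) 0‖^2/N < ε/9 := by
    have h0 : ‖deriv (deriv γ) 0‖ ≤ M := hM 0 (by norm_num)
    have : ‖deriv (deriv γ) 0‖^2 ≤ M^2 := by nlinarith [norm_nonneg (deriv (deriv γ) 0)]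
    calc ‖deriv (deriv γ) 0‖^2/N ≤ M^2/N := by gcongr
      _ < ε/9 := hNM
  have hb3 : 8*M*ε' ≤ 8*ε/9 := by
    have : ε' * (9*M) ≤ ε := by
      rw [← le_div_iff₀ (by positivity)]
      exact hε'ε
    nlinarith
  calc |_ - _| ≤ |∑ i ∈ Finset.Ico 1 N,
      ((N:ℝ)^3 * ‖γ (((i:ℝ)+1)/N) - (2:ℝ) • γ ((i:ℝ)/N) + γ (((i:ℝ)-1)/N)‖^2
        - ‖deriv (deriv γ) ((i:ℝ)/N)‖^2/N)| + |‖deriv (deriv γ) 0‖^2/N| := abs_sub _ _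
    _ ≤ 8*M*ε' + ‖deriv (deriv γ) 0‖^2/N := by
        rw [abs_of_nonneg (show (0:ℝ) ≤ ‖deriv (deriv γ) 0‖^2/N by positivity)]
        exact add_le_add_left hb1 _
    _ < 8*ε/9 + ε/9 := by
        have := add_lt_add_of_le_of_lt hb3 hb2
        linarith
    _ = ε := by ring
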